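/- Let n ≥ 1 be an integer and let α > 0. There exists a constant C = C(n,α) > 0 such that for all s, t > 0 and all x, y ∈ ℝⁿ, ∫_{ℝⁿ} [ s^α / (s + |x−u|)^{n+α} ] · [ t^α / (t + |u−y|)^{n+α} ] du ≤ C (s+t)^α / (s + t + |x−y|)^{n+α}. -/

import Mathlib

open MeasureTheory Set Real

section Aux

variable {n : ℕ} {α : ℝ}

/-- Pointwise rescaling identity. -/
lemma aux_rescale (n : ℕ) (α t d : ℝ) (ht : 0 < t) (hd : 0 ≤ d) :
    t ^ α / (t + d) ^ ((n : ℝ) + α)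
      = ((t : ℝ) ^ (n : ℕ))⁻¹ * (1 + t⁻¹ * d) ^ (-((n : ℝ) + α)) := by
  have htd : 0 < t + d := by linarith
  have h1 : 1 + t⁻¹ * d = (t + d) / t := by field_simp
  have h2 : ((t + d) / t) ^ (-((n : ℝ) + α))
      = (t + d) ^ (-((n : ℝ) + α)) * (t ^ (-((n : ℝ) + α)))⁻¹ := by
    rw [Real.div_rpow htd.le ht.le, div_eq_mul_inv]
  have h3 : (t : ℝ) ^ (-((n : ℝ) + α)) = ((t : ℝ) ^ ((n : ℝ) + α))⁻¹ :=
    Real.rpow_neg ht.le _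
  have h4 : (t + d) ^ (-((n : ℝ) + α)) = ((t + d) ^ ((n : ℝ) + α))⁻¹ :=
    Real.rpow_neg htd.le _
  have h5 : (t : ℝ) ^ ((n : ℝ) + α) = t ^ (n : ℕ) * t ^ α := by
    rw [Real.rpow_add ht, Real.rpow_natCast]
  have hpow : (0:ℝ) < (t + d) ^ ((n : ℝ) + α) := Real.rpow_pos_of_pos htd _
  have htn : (0:ℝ) < t ^ (n : ℕ) := pow_pos ht _
  rw [h1, h2, h3, h4, h5, inv_inv]
  field_simp

/-- The key dilation/translation invariance of the basic integral. -/
lemma aux_key_int (n : ℕ) (α : ℝ) (hα : 0 < α) (t : ℝ) (ht : 0 < t)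
    (y : EuclideanSpace ℝ (Fin n)) :
    (∫⁻ u : EuclideanSpace ℝ (Fin n),
        ENNReal.ofReal (t ^ α / (t + dist u y) ^ ((n : ℝ) + α)))
      = ∫⁻ v : EuclideanSpace ℝ (Fin n),
          ENNReal.ofReal ((1 + ‖v‖) ^ (-((n : ℝ) + α))) := by
  have hG : Measurable fun v : EuclideanSpace ℝ (Fin n) =>
      ENNReal.ofReal ((1 + ‖v‖) ^ (-((n : ℝ) + α))) := by
    apply ENNReal.measurable_ofReal.comp
    apply Continuous.measurable
    apply Continuous.rpow_const (continuous_const.add continuous_norm)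
    intro v
    left
    exact (add_pos_of_pos_of_nonneg one_pos (norm_nonneg v)).ne'
  -- translation invariance
  have h1 : (∫⁻ u : EuclideanSpace ℝ (Fin n),
        ENNReal.ofReal (t ^ α / (t + dist u y) ^ ((n : ℝ) + α)))
      = ∫⁻ u : EuclideanSpace ℝ (Fin n),
        ENNReal.ofReal (t ^ α / (t + ‖u‖) ^ ((n : ℝ) + α)) := by
    simp_rw [dist_eq_norm]
    exact lintegral_sub_right_eq_self
      (fun u => ENNReal.ofReal (t ^ α / (t + ‖u‖) ^ ((n : ℝ) + α))) y
  rw [h1]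
  have h2 : ∀ u : EuclideanSpace ℝ (Fin n),
      ENNReal.ofReal (t ^ α / (t + ‖u‖) ^ ((n : ℝ) + α))
        = ENNReal.ofReal (((t : ℝ) ^ (n : ℕ))⁻¹)
          * ENNReal.ofReal ((1 + ‖t⁻¹ • u‖) ^ (-((n : ℝ) + α))) := by
    intro u
    have hnu : ‖t⁻¹ • u‖ = t⁻¹ * ‖u‖ := by
      rw [norm_smul, Real.norm_eq_abs, abs_of_pos (inv_pos.mpr ht)]
    rw [hnu, aux_rescale n α t ‖u‖ ht (norm_nonneg u), ENNReal.ofReal_mul (by positivity)]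
  simp_rw [h2]
  rw [lintegral_const_mul' _ _ ENNReal.ofReal_ne_top]
  have hsmul : Measurable fun u : EuclideanSpace ℝ (Fin n) => t⁻¹ • u :=
    (continuous_const_smul (t⁻¹ : ℝ)).measurable
  have h3 : (∫⁻ u : EuclideanSpace ℝ (Fin n),
        ENNReal.ofReal ((1 + ‖t⁻¹ • u‖) ^ (-((n : ℝ) + α))))
      = ∫⁻ v, ENNReal.ofReal ((1 + ‖v‖) ^ (-((n : ℝ) + α)))
          ∂(Measure.map (fun u : EuclideanSpace ℝ (Fin n) => t⁻¹ • u) volume) := by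
    rw [lintegral_map hG hsmul]
  rw [h3, Measure.map_addHaar_smul volume (inv_ne_zero ht.ne'),
    lintegral_smul_measure, smul_eq_mul, ← mul_assoc]
  have h4 : ENNReal.ofReal (((t : ℝ) ^ (n : ℕ))⁻¹)
      * ENNReal.ofReal |((t⁻¹) ^ Module.finrank ℝ (EuclideanSpace ℝ (Fin n)))⁻¹| = 1 := by
    rw [finrank_euclideanSpace_fin, ← ENNReal.ofReal_mul (by positivity)]
    have : |((t⁻¹ : ℝ) ^ n)⁻¹| = t ^ n := by
      rw [← inv_pow, inv_inv, abs_of_pos (pow_pos ht n)]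
    rw [this, inv_mul_cancel₀ (pow_pos ht n).ne', ENNReal.ofReal_one]
  rw [h4, one_mul]

/-- The pointwise splitting inequality. -/
lemma aux_pointwise (α s t a b r : ℝ) (hα : 0 < α) (hs : 0 < s) (ht : 0 < t)
    (ha : 0 ≤ a) (hb : 0 ≤ b) (hr0 : 0 ≤ r) (hr : r ≤ a + b) {p : ℝ} (hp : 0 < p) :
    s ^ α / (s + a) ^ p * (t ^ α / (t + b) ^ p)
      ≤ 2 ^ p * s ^ α / (s + t + r) ^ p * (t ^ α / (t + b) ^ p)
        + 2 ^ p * t ^ α / (s + t + r) ^ p * (s ^ α / (s + a) ^ p) := by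
  have hstr : 0 < s + t + r := by linarith
  have hsa : 0 < s + a := by linarith
  have htb : 0 < t + b := by linarith
  rcases le_total (t + b) (s + a) with h | h
  · -- s + a is the big one
    have key : s ^ α / (s + a) ^ p ≤ 2 ^ p * s ^ α / (s + t + r) ^ p := by
      rw [div_le_div_iff₀ (by positivity) (by positivity)]
      have h2 : s + t + r ≤ 2 * (s + a) := by linarith
      have : (s + t + r) ^ p ≤ (2 * (s + a)) ^ p :=
        Real.rpow_le_rpow hstr.le h2 hp.le
      rw [Real.mul_rpow (by norm_num) hsa.le] at this
      calc s ^ α * (s + t + r) ^ p ≤ s ^ α * (2 ^ p * (s + a) ^ p) :=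
            mul_le_mul_of_nonneg_left this (by positivity)
        _ = 2 ^ p * s ^ α * (s + a) ^ p := by ring
    have h1 : s ^ α / (s + a) ^ p * (t ^ α / (t + b) ^ p)
        ≤ 2 ^ p * s ^ α / (s + t + r) ^ p * (t ^ α / (t + b) ^ p) :=
      mul_le_mul_of_nonneg_right key (by positivity)
    have h2 : (0:ℝ) ≤ 2 ^ p * t ^ α / (s + t + r) ^ p * (s ^ α / (s + a) ^ p) := by
      positivity
    linarith
  · -- t + b is the big one
    have key : t ^ α / (t + b) ^ p ≤ 2 ^ p * t ^ α / (s + t + r) ^ p := by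
      rw [div_le_div_iff₀ (by positivity) (by positivity)]
      have h2 : s + t + r ≤ 2 * (t + b) := by linarith
      have : (s + t + r) ^ p ≤ (2 * (t + b)) ^ p :=
        Real.rpow_le_rpow hstr.le h2 hp.le
      rw [Real.mul_rpow (by norm_num) htb.le] at this
      calc t ^ α * (s + t + r) ^ p ≤ t ^ α * (2 ^ p * (t + b) ^ p) :=
            mul_le_mul_of_nonneg_left this (by positivity)
        _ = 2 ^ p * t ^ α * (t + b) ^ p := by ring
    have h1 : t ^ α / (t + b) ^ p * (s ^ α / (s + a) ^ p)
        ≤ 2 ^ p * t ^ α / (s + t + r) ^ p * (s ^ α / (s + a) ^ p) :=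
      mul_le_mul_of_nonneg_right key (by positivity)
    have h2 : (0:ℝ) ≤ 2 ^ p * s ^ α / (s + t + r) ^ p * (t ^ α / (t + b) ^ p) := by
      positivity
    nlinarith [h1, h2]

end Aux

/-- The convolution-type almost-orthogonality estimate:
`∫_{ℝⁿ} [s^α/(s+|x−u|)^{n+α}] [t^α/(t+|u−y|)^{n+α}] du ≤ C (s+t)^α/(s+t+|x−y|)^{n+α}`. -/
theorem stmt_3 (n : ℕ) (hn : 1 ≤ n) (α : ℝ) (hα : 0 < α) :
    ∃ C > 0, ∀ s > (0:ℝ), ∀ t > (0:ℝ), ∀ x y : EuclideanSpace ℝ (Fin n),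
      (∫⁻ u, ENNReal.ofReal
          ((s ^ α / (s + dist x u) ^ ((n:ℝ) + α)) *
           (t ^ α / (t + dist u y) ^ ((n:ℝ) + α))))
      ≤ ENNReal.ofReal (C * (s + t) ^ α / (s + t + dist x y) ^ ((n:ℝ) + α)) := by
  set p : ℝ := (n : ℝ) + α with hp_def
  have hp : 0 < p := by positivity
  set I : ENNReal := ∫⁻ v : EuclideanSpace ℝ (Fin n),
      ENNReal.ofReal ((1 + ‖v‖) ^ (-p)) with hI_def
  have hI : I < ⊤ := by
    apply finite_integral_one_add_norm
    rw [finrank_euclideanSpace_fin]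
    simpa [hp_def] using hα
  set M : ℝ := I.toReal + 1 with hM_def
  have hM : 0 < M := by positivity
  have hIM : I ≤ ENNReal.ofReal M := by
    conv_lhs => rw [← ENNReal.ofReal_toReal hI.ne]
    exact ENNReal.ofReal_le_ofReal (by rw [hM_def]; linarith)
  refine ⟨2 ^ p * 2 * M, by positivity, fun s hs t ht x y => ?_⟩
  set r : ℝ := dist x y with hr_def
  have hr0 : 0 ≤ r := dist_nonneg
  have hstr : 0 < s + t + r := by linarith
  set c1 : ℝ := 2 ^ p * s ^ α / (s + t + r) ^ p with hc1_def
  set c2 : ℝ := 2 ^ p * t ^ α / (s + t + r) ^ p with hc2_def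
  have hc1 : 0 ≤ c1 := by positivity
  have hc2 : 0 ≤ c2 := by positivity
  -- measurability
  have hft : Measurable fun u : EuclideanSpace ℝ (Fin n) =>
      ENNReal.ofReal (t ^ α / (t + dist u y) ^ p) := by
    apply ENNReal.measurable_ofReal.comp
    apply Continuous.measurable
    refine continuous_const.div ?_ fun u => ?_
    · apply Continuous.rpow_const (continuous_const.add (continuous_id.dist continuous_const))
      intro u; left
      have : (0:ℝ) < t + dist u y := by have : (0:ℝ) ≤ dist u y := dist_nonneg; linarith
      exact this.ne'
    · have : (0:ℝ) < t + dist u y := by have : (0:ℝ) ≤ dist u y := dist_nonneg; linarith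
      exact (Real.rpow_pos_of_pos this p).ne'
  have hfs : Measurable fun u : EuclideanSpace ℝ (Fin n) =>
      ENNReal.ofReal (s ^ α / (s + dist x u) ^ p) := by
    apply ENNReal.measurable_ofReal.comp
    apply Continuous.measurable
    refine continuous_const.div ?_ fun u => ?_
    · apply Continuous.rpow_const (continuous_const.add (continuous_const.dist continuous_id))
      intro u; left
      have : (0:ℝ) < s + dist x u := by have : (0:ℝ) ≤ dist x u := dist_nonneg; linarith
      exact this.ne'
    · have : (0:ℝ) < s + dist x u := by have : (0:ℝ) ≤ dist x u := dist_nonneg; linarith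
      exact (Real.rpow_pos_of_pos this p).ne'
  -- pointwise bound
  have hpt : ∀ u : EuclideanSpace ℝ (Fin n),
      ENNReal.ofReal ((s ^ α / (s + dist x u) ^ p) * (t ^ α / (t + dist u y) ^ p))
        ≤ ENNReal.ofReal c1 * ENNReal.ofReal (t ^ α / (t + dist u y) ^ p)
          + ENNReal.ofReal c2 * ENNReal.ofReal (s ^ α / (s + dist x u) ^ p) := by
    intro u
    have htri : r ≤ dist x u + dist u y := dist_triangle x u y
    have hb := aux_pointwise α s t (dist x u) (dist u y) r hα hs ht
      dist_nonneg dist_nonneg hr0 htri hp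
    calc ENNReal.ofReal ((s ^ α / (s + dist x u) ^ p) * (t ^ α / (t + dist u y) ^ p))
        ≤ ENNReal.ofReal (c1 * (t ^ α / (t + dist u y) ^ p)
            + c2 * (s ^ α / (s + dist x u) ^ p)) := by
          apply ENNReal.ofReal_le_ofReal
          simpa [hc1_def, hc2_def] using hb
      _ ≤ ENNReal.ofReal (c1 * (t ^ α / (t + dist u y) ^ p))
            + ENNReal.ofReal (c2 * (s ^ α / (s + dist x u) ^ p)) :=
          ENNReal.ofReal_add_le
      _ = ENNReal.ofReal c1 * ENNReal.ofReal (t ^ α / (t + dist u y) ^ p)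
            + ENNReal.ofReal c2 * ENNReal.ofReal (s ^ α / (s + dist x u) ^ p) := by
          rw [ENNReal.ofReal_mul hc1, ENNReal.ofReal_mul hc2]
  -- integral computations
  have hint_t : (∫⁻ u : EuclideanSpace ℝ (Fin n),
      ENNReal.ofReal (t ^ α / (t + dist u y) ^ p)) = I :=
    aux_key_int n α hα t ht y
  have hint_s : (∫⁻ u : EuclideanSpace ℝ (Fin n),
      ENNReal.ofReal (s ^ α / (s + dist x u) ^ p)) = I := by
    simp_rw [dist_comm x]
    exact aux_key_int n α hα s hs x
  calc (∫⁻ u, ENNReal.ofReal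
          ((s ^ α / (s + dist x u) ^ p) * (t ^ α / (t + dist u y) ^ p)))
      ≤ ∫⁻ u, (ENNReal.ofReal c1 * ENNReal.ofReal (t ^ α / (t + dist u y) ^ p)
          + ENNReal.ofReal c2 * ENNReal.ofReal (s ^ α / (s + dist x u) ^ p)) :=
        lintegral_mono hpt
    _ = (∫⁻ u, ENNReal.ofReal c1 * ENNReal.ofReal (t ^ α / (t + dist u y) ^ p))
          + ∫⁻ u, ENNReal.ofReal c2 * ENNReal.ofReal (s ^ α / (s + dist x u) ^ p) :=
        lintegral_add_left (hft.const_mul _) _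
    _ = ENNReal.ofReal c1 * I + ENNReal.ofReal c2 * I := by
        rw [lintegral_const_mul' _ _ ENNReal.ofReal_ne_top,
          lintegral_const_mul' _ _ ENNReal.ofReal_ne_top, hint_t, hint_s]
    _ = ENNReal.ofReal (c1 + c2) * I := by
        rw [ENNReal.ofReal_add hc1 hc2, add_mul]
    _ ≤ ENNReal.ofReal (c1 + c2) * ENNReal.ofReal M := mul_le_mul' le_rfl hIM
    _ = ENNReal.ofReal ((c1 + c2) * M) := by
        rw [ENNReal.ofReal_mul (by positivity)]
    _ ≤ ENNReal.ofReal (2 ^ p * 2 * M * (s + t) ^ α / (s + t + r) ^ p) := by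
        apply ENNReal.ofReal_le_ofReal
        have hsum : s ^ α + t ^ α ≤ 2 * (s + t) ^ α := by
          have h1 : s ^ α ≤ (s + t) ^ α :=
            Real.rpow_le_rpow hs.le (by linarith) hα.le
          have h2 : t ^ α ≤ (s + t) ^ α :=
            Real.rpow_le_rpow ht.le (by linarith) hα.le
          linarith
        rw [hc1_def, hc2_def, ← add_div, ← mul_add]
        rw [div_mul_eq_mul_div, div_le_div_iff₀ (by positivity) (by positivity)]
        have : 2 ^ p * (s ^ α + t ^ α) * M ≤ 2 ^ p * (2 * (s + t) ^ α) * M := by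
          apply mul_le_mul_of_nonneg_right _ hM.le
          exact mul_le_mul_of_nonneg_left hsum (by positivity)
        nlinarith [Real.rpow_pos_of_pos hstr p, this]
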